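/- Let G be a finite group. Then G is soluble if and only if the only idempotents of the Burnside ring B(G) are 0 and 1. -/

import Mathlib

open scoped Classical

/-- The mark of the transitive `G`-set `G/K` at the subgroup `U`: the number of
`U`-fixed points of `G/K`. -/
noncomputable def burnsideIntMark {G : Type*} [Group G] [Fintype G] (K U : Subgroup G) : ℤ :=
  (Nat.card {x : G ⧸ K // ∀ u ∈ U, u • x = x} : ℤ)

namespace DressAux

variable {G : Type*} [Group G] [Fintype G]
set_option linter.unusedSectionVars false
set_option maxHeartbeats 1000000


def cj (g : G) (K : Subgroup G) : Subgroup G := K.map (MulAut.conj g).toMonoidHom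

lemma mem_cj {g x : G} {K : Subgroup G} : x ∈ cj g K ↔ g⁻¹ * x * g ∈ K := by
  constructor
  · rintro ⟨k, hk, rfl⟩
    simpa [MulAut.conj, mul_assoc] using hk
  · intro h
    exact ⟨g⁻¹ * x * g, h, by simp [MulAut.conj, mul_assoc]⟩

lemma card_cj (g : G) (K : Subgroup G) : Nat.card (cj g K) = Nat.card K :=
  (Nat.card_congr (K.equivMapOfInjective _ (MulAut.conj g).injective).toEquiv).symm

lemma fixed_iff {K U : Subgroup G} {g : G} :
    (∀ u ∈ U, u • (g : G ⧸ K) = (g : G ⧸ K)) ↔ U ≤ cj g K := by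
  constructor
  · intro h u hu
    have h2 := h u hu
    rw [MulAction.Quotient.smul_mk, smul_eq_mul, QuotientGroup.eq] at h2
    rw [mem_cj]
    simpa [mul_assoc] using K.inv_mem h2
  · intro h u hu
    have h2 := mem_cj.mp (h hu)
    rw [MulAction.Quotient.smul_mk, smul_eq_mul, QuotientGroup.eq]
    simpa [mul_assoc] using K.inv_mem h2

lemma mark_eq_card (K U : Subgroup G) :
    burnsideIntMark K U = (Nat.card {x : G ⧸ K // ∀ u ∈ U, u • x = x} : ℤ) := rfl

lemma mark_ne_zero_iff {K U : Subgroup G} :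
    burnsideIntMark K U ≠ 0 ↔ ∃ g : G, U ≤ cj g K := by
  rw [mark_eq_card]
  rw [Ne, Int.natCast_eq_zero, ← Ne, Nat.card_ne_zero]
  constructor
  · rintro ⟨⟨x⟩, -⟩
    obtain ⟨g, hgx⟩ := QuotientGroup.mk_surjective x.1
    refine ⟨g, fixed_iff.mp ?_⟩
    rw [hgx]; exact x.2
  · rintro ⟨g, hg⟩
    exact ⟨⟨⟨(g : G ⧸ K), fixed_iff.mpr hg⟩⟩, Finite.of_fintype _⟩

lemma card_le_of_mark_ne_zero {K U : Subgroup G} (h : burnsideIntMark K U ≠ 0) :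
    Nat.card U ≤ Nat.card K := by
  obtain ⟨g, hg⟩ := mark_ne_zero_iff.mp h
  calc Nat.card U ≤ Nat.card (cj g K) := Subgroup.card_le_of_le hg
  _ = Nat.card K := card_cj g K

lemma eq_cj_of_mark_ne_zero {K U : Subgroup G} (h : burnsideIntMark K U ≠ 0)
    (hc : Nat.card U = Nat.card K) : ∃ g : G, U = cj g K := by
  obtain ⟨g, hg⟩ := mark_ne_zero_iff.mp h
  exact ⟨g, (Subgroup.eq_of_le_of_card_ge hg (by rw [card_cj, hc])).symm ▸ rfl⟩


def fixType (K V : Subgroup G) : Type _ := {x : G ⧸ K // ∀ u ∈ V, u • x = x}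

noncomputable instance (K V : Subgroup G) : Fintype (fixType K V) := by
  unfold fixType; infer_instance

lemma mark_eq (K V : Subgroup G) : burnsideIntMark K V = (Nat.card (fixType K V) : ℤ) := rfl

lemma smul_key {g u : G} {K : Subgroup G} (x : G ⧸ K) :
    (u • (g⁻¹ • x) = g⁻¹ • x) ↔ ((g * u * g⁻¹) • x = x) := by
  rw [← smul_left_cancel_iff g]
  simp [smul_smul, mul_assoc]

lemma mark_cj (K U : Subgroup G) (g : G) :
    burnsideIntMark K (cj g U) = burnsideIntMark K U := by
  rw [mark_eq, mark_eq]
  congr 1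
  apply Nat.card_congr
  refine Equiv.subtypeEquiv (MulAction.toPerm g⁻¹ : Equiv.Perm (G ⧸ K)) ?_
  intro x
  show (∀ u ∈ cj g U, u • x = x) ↔ ∀ u ∈ U, u • (g⁻¹ • x) = g⁻¹ • x
  constructor
  · intro h u hu
    rw [smul_key x]
    refine h _ (mem_cj.mpr ?_)
    have : g⁻¹ * (g * u * g⁻¹) * g = u := by group
    rw [this]; exact hu
  · intro h v hv
    have hu : g⁻¹ * v * g ∈ U := mem_cj.mp hv
    have h2 := (smul_key x).mp (h _ hu)
    have : g * (g⁻¹ * v * g) * g⁻¹ = v := by group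
    rwa [this] at h2

lemma mem_normalizer_of_le_cj {g : G} {K : Subgroup G} (h : K ≤ cj g K) :
    g ∈ (Subgroup.normalizer (K : Set G)) := by
  have hcard : Nat.card (cj g K) = Nat.card K :=
    (Nat.card_congr (K.equivMapOfInjective _ (MulAut.conj g).injective).toEquiv).symm
  have heq : K = cj g K := Subgroup.eq_of_le_of_card_ge h (le_of_eq hcard)
  rw [Subgroup.mem_normalizer_iff]
  intro x
  constructor
  · intro hx
    have hx' : g⁻¹ * (g * x * g⁻¹) * g ∈ K := by
      have hgx : g⁻¹ * (g * x * g⁻¹) * g = x := by group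
      rw [hgx]; exact hx
    have := mem_cj.mpr hx'
    rwa [← heq] at this
  · intro hx
    have h1 : g * x * g⁻¹ ∈ cj g K := heq ▸ hx
    have h2 := mem_cj.mp h1
    have hgx : g⁻¹ * (g * x * g⁻¹) * g = x := by group
    rwa [hgx] at h2


lemma card_mul_mark_self (K : Subgroup G) :
    (Nat.card K) * Nat.card (fixType K K) = Nat.card (Subgroup.normalizer (K : Set G)) := by
  set N := (Subgroup.normalizer (K : Set G)) with hN
  set K' := K.subgroupOf N with hK'
  have hle : K ≤ N := Subgroup.le_normalizer
  have hsplit : Nat.card N = Nat.card (↥N ⧸ K') * Nat.card K' :=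
    Subgroup.card_eq_card_quotient_mul_card_subgroup K'
  have hcK' : Nat.card K' = Nat.card K :=
    Nat.card_congr (Subgroup.subgroupOfEquivOfLe hle).toEquiv
  -- construct the bijection
  have hf : ∀ n : ↥N, ∀ u ∈ K, u • (((n : G) : G ⧸ K)) = ((n : G) : G ⧸ K) := by
    intro n u hu
    rw [MulAction.Quotient.smul_mk, smul_eq_mul, QuotientGroup.eq]
    have h1 := (Subgroup.mem_normalizer_iff.mp n.2 ((n:G)⁻¹ * u⁻¹ * (n:G))).mpr
    have h2 : (n:G) * ((n:G)⁻¹ * u⁻¹ * (n:G)) * (n:G)⁻¹ = u⁻¹ := by group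
    have h3 := h1 (by rw [h2]; exact K.inv_mem hu)
    have h4 : (u * (n:G))⁻¹ * (n:G) = (n:G)⁻¹ * u⁻¹ * (n:G) := by group
    rw [h4]; exact h3
  let f : ↥N → fixType K K := fun n => ⟨((n : G) : G ⧸ K), hf n⟩
  let F : ↥N ⧸ K' → fixType K K := Quotient.lift f (by
    intro a b hab
    have h1 : (a⁻¹ * b : ↥N) ∈ K' := (QuotientGroup.leftRel_apply).mp hab
    have h2 : (a : G)⁻¹ * (b : G) ∈ K := h1
    exact Subtype.ext (QuotientGroup.eq.mpr h2))
  have hbij : Function.Bijective F := by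
    constructor
    · intro x y
      induction x using Quotient.ind
      induction y using Quotient.ind
      rename_i a b
      intro hFab
      have h1 : ((a : G) : G ⧸ K) = ((b : G) : G ⧸ K) := congrArg Subtype.val hFab
      have h2 : (a : G)⁻¹ * (b : G) ∈ K := QuotientGroup.eq.mp h1
      exact Quotient.sound ((QuotientGroup.leftRel_apply).mpr h2)
    · intro x
      obtain ⟨g, hg⟩ := QuotientGroup.mk_surjective x.1
      have hfix : ∀ u ∈ K, u • (g : G ⧸ K) = (g : G ⧸ K) := by
        intro u hu; rw [hg]; exact x.2 u hu
      have hgN : g ∈ N := mem_normalizer_of_le_cj (fixed_iff.mp hfix)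
      exact ⟨Quotient.mk _ ⟨g, hgN⟩, Subtype.ext hg⟩
  have hcq : Nat.card (↥N ⧸ K') = Nat.card (fixType K K) := Nat.card_eq_of_bijective F hbij
  rw [hsplit, hcq, hcK', Nat.mul_comm]



lemma card_mul_mark_self' (K : Subgroup G) :
    (Nat.card K : ℤ) * burnsideIntMark K K = (Nat.card (Subgroup.normalizer (K : Set G)) : ℤ) := by
  rw [mark_eq]
  exact_mod_cast card_mul_mark_self K


lemma norm_conj_mem {U : Subgroup G} {n : G} (hn : n ∈ (Subgroup.normalizer (U : Set G))) {u : G} (hu : u ∈ U) :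
    n⁻¹ * u * n ∈ U := by
  have := (Subgroup.mem_normalizer_iff.mp ((Subgroup.normalizer (U : Set G)).inv_mem hn) u).mp hu
  simpa using this

/-- A subgroup `H` normalizing `V` acts on the `V`-fixed points of `G ⧸ K`. -/
def fixSMul (K : Subgroup G) {V H : Subgroup G}
    (hyp : ∀ h ∈ H, ∀ v ∈ V, h⁻¹ * v * h ∈ V) : MulAction ↥H (fixType K V) where
  smul h x := ⟨(h : G) • x.1, by
    intro v hv
    have h1 : (h : G)⁻¹ * v * (h : G) ∈ V := hyp _ h.2 v hv
    have h2 := x.2 _ h1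
    calc v • (h : G) • x.1 = ((h : G) * ((h : G)⁻¹ * v * (h : G))) • x.1 := by
          rw [smul_smul]; congr 1; group
    _ = (h : G) • x.1 := by rw [← smul_smul, h2]⟩
  one_smul x := Subtype.ext (one_smul G x.1)
  mul_smul a b x := Subtype.ext (by
    show ((a * b : ↥H) : G) • x.1 = (a : G) • ((b : G) • x.1)
    rw [smul_smul]; rfl)

lemma mark_congr_dvd (K U : Subgroup G) :
    (Nat.card (Subgroup.normalizer (U : Set G)) : ℤ) ∣
      ∑ n : (Subgroup.normalizer (U : Set G)), burnsideIntMark K (U ⊔ Subgroup.zpowers (n : G)) := by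
  set N := (Subgroup.normalizer (U : Set G)) with hN
  have hyp : ∀ h ∈ N, ∀ v ∈ U, h⁻¹ * v * h ∈ U := fun h hh v hv => norm_conj_mem hh hv
  letI A : MulAction ↥N (fixType K U) := fixSMul K hyp
  have hsmul : ∀ (n : ↥N) (x : fixType K U), (n • x).1 = (n : G) • x.1 := fun _ _ => rfl
  have hb := MulAction.sum_card_fixedBy_eq_card_orbits_mul_card_group ↥N (fixType K U)
  have hterm : ∀ n : ↥N,
      Fintype.card (MulAction.fixedBy (fixType K U) n) =
        Nat.card (fixType K (U ⊔ Subgroup.zpowers (n : G))) := by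
    intro n
    rw [← Nat.card_eq_fintype_card]
    apply Nat.card_congr
    refine ⟨fun y => ⟨y.1.1, ?_⟩, fun x => ⟨⟨x.1, fun u hu => x.2 u (Subgroup.mem_sup_left hu)⟩,
      ?_⟩, fun y => rfl, fun x => rfl⟩
    · intro u hu
      have hst : U ⊔ Subgroup.zpowers (n : G) ≤ MulAction.stabilizer G y.1.1 := by
        refine sup_le (fun u hu => y.1.2 u hu) ?_
        rw [Subgroup.zpowers_le]
        show (n : G) • y.1.1 = y.1.1
        have := y.2
        rw [MulAction.mem_fixedBy] at this
        exact congrArg Subtype.val this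
      exact hst hu
    · show n • _ = _
      apply Subtype.ext
      refine (hsmul _ _).trans ?_
      exact x.2 (n : G) (Subgroup.mem_sup_right (Subgroup.mem_zpowers _))
  refine ⟨(Fintype.card (Quotient (MulAction.orbitRel ↥N (fixType K U))) : ℤ), ?_⟩
  have : ∑ n : ↥N, burnsideIntMark K (U ⊔ Subgroup.zpowers (n : G)) =
      ((∑ n : ↥N, Fintype.card (MulAction.fixedBy (fixType K U) n) : ℕ) : ℤ) := by
    push_cast
    refine Finset.sum_congr rfl fun n _ => ?_
    rw [mark_eq, hterm n]
  rw [this, hb]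
  push_cast
  rw [Nat.card_eq_fintype_card]
  ring


lemma mark_modEq_of_pgroup (K U V : Subgroup G) {p : ℕ} [hp : Fact p.Prime]
    (W : Subgroup ↥U) (hW : W.Normal) (hV : V = W.map U.subtype)
    (hpq : IsPGroup p (↥U ⧸ W)) :
    burnsideIntMark K U ≡ burnsideIntMark K V [ZMOD p] := by
  have hVU : V ≤ U := hV ▸ Subgroup.map_subtype_le W
  have hyp : ∀ h ∈ U, ∀ v ∈ V, h⁻¹ * v * h ∈ V := by
    subst hV
    rintro h hh v ⟨w, hw, rfl⟩
    refine ⟨(⟨h, hh⟩ : ↥U)⁻¹ * w * ⟨h, hh⟩, ?_, rfl⟩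
    have := hW.conj_mem w hw (⟨h, hh⟩ : ↥U)⁻¹
    simpa using this
  have hmemV : ∀ w : ↥U, w ∈ W → (w : G) ∈ V := by
    intro w hw; rw [hV]; exact ⟨w, hw, rfl⟩
  letI A : MulAction ↥U (fixType K V) := fixSMul K hyp
  have hsmul : ∀ (h : ↥U) (x : fixType K V), (h • x).1 = (h : G) • x.1 := fun _ _ => rfl
  let ρ : ↥U →* Equiv.Perm (fixType K V) := MulAction.toPermHom ↥U (fixType K V)
  have hker : W ≤ ρ.ker := by
    intro w hw
    rw [MonoidHom.mem_ker]
    ext y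
    show w • y = y
    apply Subtype.ext
    rw [hsmul]
    exact y.2 _ (hmemV w hw)
  let ρ' : (↥U ⧸ W) →* Equiv.Perm (fixType K V) := QuotientGroup.lift W ρ hker
  letI B : MulAction (↥U ⧸ W) (fixType K V) :=
    { smul := fun q y => ρ' q y
      one_smul := fun y => by show ρ' 1 y = y; rw [map_one]; rfl
      mul_smul := fun a b y => by show ρ' (a*b) y = ρ' a (ρ' b y); rw [map_mul]; rfl }
  have hqsmul : ∀ (h : ↥U) (y : fixType K V), (QuotientGroup.mk h : ↥U ⧸ W) • y = h • y := by
    intro h y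
    show ρ' (QuotientGroup.mk h) y = _
    rw [QuotientGroup.lift_mk]
    rfl
  have hfixiff : ∀ y : fixType K V, y ∈ MulAction.fixedPoints (↥U ⧸ W) (fixType K V) ↔ ∀ u ∈ U, u • y.1 = y.1 := by
    intro y
    constructor
    · intro hy u hu
      have := hy (QuotientGroup.mk (⟨u, hu⟩ : ↥U))
      rw [hqsmul] at this
      have := congrArg Subtype.val this
      rwa [hsmul] at this
    · intro h q
      induction q using QuotientGroup.induction_on with
      | H h' =>
        rw [hqsmul]
        apply Subtype.ext
        rw [hsmul]
        exact h _ h'.2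
  have hcard : Nat.card (MulAction.fixedPoints (↥U ⧸ W) (fixType K V)) = Nat.card (fixType K U) := by
    apply Nat.card_congr
    refine ⟨fun y => ⟨y.1.1, (hfixiff y.1).mp y.2⟩,
      fun x => ⟨⟨x.1, fun v hv => x.2 v (hVU hv)⟩, (hfixiff _).mpr (fun u hu => x.2 u hu)⟩,
      fun y => rfl, fun x => rfl⟩
  have hmod : Nat.card (fixType K V) ≡ Nat.card (MulAction.fixedPoints (↥U ⧸ W) (fixType K V)) [MOD p] :=
    hpq.card_modEq_card_fixedPoints (fixType K V)
  rw [hcard] at hmod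
  rw [mark_eq, mark_eq, Int.natCast_modEq_iff]
  exact hmod.symm


lemma quot_nontrivial {H : Type*} [Group H] (C : Subgroup H) [C.Normal] (h : C ≠ ⊤) :
    Nontrivial (H ⧸ C) := by
  obtain ⟨x, hx⟩ : ∃ x : H, x ∉ C := by
    by_contra hcon
    push_neg at hcon
    exact h ((Subgroup.eq_top_iff' C).mpr hcon)
  exact ⟨⟨QuotientGroup.mk x, 1, fun hh => hx ((QuotientGroup.eq_one_iff x).mp hh)⟩⟩

lemma commutator_ne_top (H : Type*) [Group H] [hs : Group.IsSolvable H] [Nontrivial H] :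
    commutator H ≠ ⊤ := by
  intro htop
  have hall : ∀ n, derivedSeries H n = ⊤ := by
    intro n
    induction n with
    | zero => exact derivedSeries_zero H
    | succ n ih =>
      rw [derivedSeries_succ, ih, ← commutator_def, htop]
  obtain ⟨n, hn⟩ := hs.solvable
  rw [hall n] at hn
  exact top_ne_bot hn

lemma exists_normal_pquot (H : Type*) [Group H] [Finite H] [Group.IsSolvable H] [Nontrivial H] :
    ∃ (p : ℕ) (W : Subgroup H) (_ : W.Normal), p.Prime ∧ W ≠ ⊤ ∧ IsPGroup p (H ⧸ W) := by
  have hCne : commutator H ≠ ⊤ := commutator_ne_top H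
  haveI hA : Nontrivial (Abelianization H) := quot_nontrivial (commutator H) hCne
  haveI : Fintype (Abelianization H) := Fintype.ofFinite _
  obtain ⟨p, hp, hpd⟩ := Nat.exists_prime_and_dvd (n := Nat.card (Abelianization H))
    (by have := Finite.one_lt_card_iff_nontrivial.mpr hA; omega)
  haveI : Fact p.Prime := ⟨hp⟩
  have hpd' : p ∣ Fintype.card (Abelianization H) := by rwa [← Nat.card_eq_fintype_card]
  obtain ⟨a, ha⟩ := exists_prime_orderOf_dvd_card p hpd'
  set B : Subgroup (Abelianization H) := (powMonoidHom p).range with hB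
  have hBne : B ≠ ⊤ := by
    intro htop
    have hsurj : Function.Surjective (powMonoidHom p : Abelianization H →* Abelianization H) :=
      MonoidHom.range_eq_top.mp htop
    have hinj := Finite.injective_iff_surjective.mpr hsurj
    have h1 : powMonoidHom p a = powMonoidHom p 1 := by
      show a ^ p = (1 : Abelianization H) ^ p
      rw [one_pow, ← ha, pow_orderOf_eq_one]
    have := hinj h1
    rw [this, orderOf_one] at ha
    exact hp.ne_one ha.symm
  haveI hQnt : Nontrivial (Abelianization H ⧸ B) := quot_nontrivial B hBne
  have hQp : IsPGroup p (Abelianization H ⧸ B) := by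
    intro q
    refine ⟨1, ?_⟩
    induction q using QuotientGroup.induction_on with
    | H x =>
      rw [pow_one, ← QuotientGroup.mk_pow, QuotientGroup.eq_one_iff]
      exact ⟨x, rfl⟩
  let φ : H →* Abelianization H ⧸ B := (QuotientGroup.mk' B).comp Abelianization.of
  have hφs : Function.Surjective φ := by
    intro q
    obtain ⟨x, rfl⟩ := QuotientGroup.mk'_surjective B q
    refine ⟨x.out, ?_⟩
    show QuotientGroup.mk' B (Abelianization.of x.out) = QuotientGroup.mk' B x
    congr 1
    exact QuotientGroup.out_eq' x
  refine ⟨p, φ.ker, inferInstance, hp, ?_, ?_⟩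
  · intro htop
    obtain ⟨q, hq⟩ := exists_ne (1 : Abelianization H ⧸ B)
    obtain ⟨x, rfl⟩ := hφs q
    apply hq
    have hx : x ∈ φ.ker := htop ▸ Subgroup.mem_top x
    rwa [MonoidHom.mem_ker] at hx
  · have e := QuotientGroup.quotientKerEquivOfSurjective φ hφs
    exact hQp.of_equiv e.symm


lemma eq_of_modEq_01 {p : ℕ} (hp : p.Prime) {a b : ℤ} (h : a ≡ b [ZMOD p])
    (ha : a = 0 ∨ a = 1) (hb : b = 0 ∨ b = 1) : a = b := by
  have h2 : (2 : ℤ) ≤ (p : ℤ) := by exact_mod_cast hp.two_le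
  have hd := Int.ModEq.dvd h
  rcases ha with rfl | rfl <;> rcases hb with rfl | rfl <;> first
  | rfl
  | · exfalso
      simp only [sub_zero, zero_sub, sub_self] at hd
      rcases hd with ⟨k, hk⟩
      have : (p : ℤ) ∣ 1 := by
        first
        | exact ⟨k, hk⟩
        | · rw [← Int.dvd_neg]; exact ⟨k, hk⟩
      have := Int.le_of_dvd one_pos this
      omega

theorem forward_dir (hG : IsSolvable G) (c : Subgroup G → ℤ)
    (hid : ∀ U : Subgroup G,
      (∑ K : Subgroup G, c K * burnsideIntMark K U) * (∑ K : Subgroup G, c K * burnsideIntMark K U) =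
        ∑ K : Subgroup G, c K * burnsideIntMark K U) :
    (∀ U : Subgroup G, ∑ K : Subgroup G, c K * burnsideIntMark K U = 0) ∨
      (∀ U : Subgroup G, ∑ K : Subgroup G, c K * burnsideIntMark K U = 1) := by
  haveI : Group.IsSolvable G := hG
  set m : Subgroup G → ℤ := fun U => ∑ K : Subgroup G, c K * burnsideIntMark K U with hm
  have h01 : ∀ U, m U = 0 ∨ m U = 1 := by
    intro U
    have h := hid U
    have h2 : m U * (m U - 1) = 0 := by
      have : m U * m U = m U := h
      ring_nf
      ring_nf at this
      linarith
    rcases mul_eq_zero.mp h2 with h' | h'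
    · exact Or.inl h'
    · exact Or.inr (by linarith)
  have key : ∀ n (U : Subgroup G), Nat.card ↥U ≤ n → m U = m ⊥ := by
    intro n
    induction n with
    | zero =>
      intro U hU
      have : 0 < Nat.card ↥U := Nat.card_pos
      omega
    | succ n ih =>
      intro U hU
      by_cases hbot : U = ⊥
      · rw [hbot]
      · haveI : Nontrivial ↥U := (Subgroup.nontrivial_iff_ne_bot U).mpr hbot
        obtain ⟨p, W, hWn, hp, hWne, hpq⟩ := exists_normal_pquot ↥U
        haveI := hWn
        haveI : Fact p.Prime := ⟨hp⟩
        have hmod : ∀ K, burnsideIntMark K U ≡ burnsideIntMark K (W.map U.subtype) [ZMOD p] := fun K =>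
          mark_modEq_of_pgroup K U _ W hWn rfl hpq
        have hdvd : (p : ℤ) ∣ m (W.map U.subtype) - m U := by
          have : m (W.map U.subtype) - m U =
              ∑ K : Subgroup G, (c K * burnsideIntMark K (W.map U.subtype) - c K * burnsideIntMark K U) := by
            rw [hm]; rw [← Finset.sum_sub_distrib]
          rw [this]
          refine Finset.dvd_sum fun K _ => ?_
          have : c K * burnsideIntMark K (W.map U.subtype) - c K * burnsideIntMark K U =
              c K * (burnsideIntMark K (W.map U.subtype) - burnsideIntMark K U) := by ring
          rw [this]
          exact dvd_mul_of_dvd_right (Int.ModEq.dvd (hmod K)) _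
        have hmm : m U ≡ m (W.map U.subtype) [ZMOD p] := Int.modEq_iff_dvd.mpr hdvd
        have hcV : Nat.card ↥(W.map U.subtype) ≤ n := by
          have h1 : Nat.card ↥(W.map U.subtype) = Nat.card W :=
            (Nat.card_congr (W.equivMapOfInjective U.subtype U.subtype_injective).toEquiv).symm
          have h2 : Nat.card W ≤ Nat.card ↥U := Subgroup.card_le_card_group W
          have h3 : Nat.card W ≠ Nat.card ↥U := fun h => hWne (Subgroup.eq_top_of_card_eq W h)
          omega
        have hV := ih _ hcV
        have := eq_of_modEq_01 hp hmm (h01 U) (h01 _)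
        rw [this, hV]
  have hb := h01 ⊥
  have hall : ∀ U : Subgroup G, m U = m ⊥ := fun U =>
    key (Fintype.card G) U (by
      have := Subgroup.card_le_card_group U
      simpa [Nat.card_eq_fintype_card] using this)
  rcases hb with h | h
  · exact Or.inl fun U => by rw [show (∑ K : Subgroup G, c K * burnsideIntMark K U) = m U from rfl, hall U, h]
  · exact Or.inr fun U => by rw [show (∑ K : Subgroup G, c K * burnsideIntMark K U) = m U from rfl, hall U, h]


lemma exists_comb : ∀ (n mcount : ℕ) (φ : Subgroup G → ℤ)
    (_ : ∀ (g : G) (U : Subgroup G), φ (cj g U) = φ U)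
    (_ : ∀ U : Subgroup G, (Nat.card (Subgroup.normalizer (U : Set G)) : ℤ) ∣
        ∑ x : (Subgroup.normalizer (U : Set G)), φ (U ⊔ Subgroup.zpowers (x : G)))
    (_ : ∀ U, φ U ≠ 0 → Nat.card ↥U ≤ n)
    (_ : (Finset.univ.filter fun U : Subgroup G =>
        φ U ≠ 0 ∧ Nat.card ↥U = n).card ≤ mcount),
    ∃ c : Subgroup G → ℤ, ∀ U, φ U = ∑ K : Subgroup G, c K * burnsideIntMark K U := by
  intro n
  induction n with
  | zero =>
    intro mcount φ _ _ hbd _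
    refine ⟨0, fun U => ?_⟩
    have h0 : φ U = 0 := by
      by_contra h
      have h1 := hbd U h
      have h2 : 0 < Nat.card ↥U := Nat.card_pos
      omega
    simp [h0]
  | succ n ihn =>
    intro mcount
    induction mcount with
    | zero =>
      intro φ hconj hcong hbd hcount
      apply ihn (Fintype.card (Subgroup G)) φ hconj hcong ?_ ?_
      · intro U hU
        have h1 := hbd U hU
        rcases Nat.lt_or_ge (Nat.card ↥U) (n + 1) with h | h
        · omega
        · exfalso
          have hmem : U ∈ Finset.univ.filter fun U : Subgroup G =>
              φ U ≠ 0 ∧ Nat.card ↥U = n + 1 :=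
            Finset.mem_filter.mpr ⟨Finset.mem_univ U, hU, le_antisymm h1 h⟩
          have := Finset.card_pos.mpr ⟨U, hmem⟩
          omega
      · exact le_trans (Finset.card_filter_le _ _) (by simp)
    | succ mc ihm =>
      intro φ hconj hcong hbd hcount
      by_cases hm : (Finset.univ.filter fun U : Subgroup G =>
          φ U ≠ 0 ∧ Nat.card ↥U = n + 1).card ≤ mc
      · exact ihm φ hconj hcong hbd hm
      obtain ⟨K, hKmem⟩ := Finset.card_pos.mp (show 0 < (Finset.univ.filter fun U : Subgroup G =>
          φ U ≠ 0 ∧ Nat.card ↥U = n + 1).card by omega)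
      have hKmem' := Finset.mem_filter.mp hKmem
      obtain ⟨-, hKne, hKcard⟩ := hKmem'
      set N := (Subgroup.normalizer (K : Set G)) with hN
      -- evaluate the congruence sum at K
      have hterm : ∀ x : ↥N, φ (K ⊔ Subgroup.zpowers (x : G)) =
          if (x : G) ∈ K then φ K else 0 := by
        intro x
        by_cases hx : (x : G) ∈ K
        · rw [if_pos hx]
          congr 1
          exact sup_eq_left.mpr ((Subgroup.zpowers_le).mpr hx)
        · rw [if_neg hx]
          by_contra hne
          have hb := hbd _ hne
          have hlt : K < K ⊔ Subgroup.zpowers (x : G) :=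
            lt_of_le_of_ne le_sup_left
              (fun h => hx (h ▸ Subgroup.mem_sup_right (Subgroup.mem_zpowers _)))
          have hcardlt : Nat.card K < Nat.card ↥(K ⊔ Subgroup.zpowers (x : G)) := by
            have hle := Subgroup.card_le_of_le hlt.le
            rcases lt_or_eq_of_le hle with h | h
            · exact h
            · exact absurd (Subgroup.eq_of_le_of_card_ge hlt.le (le_of_eq h.symm)) hlt.ne
          omega
      have hsum : ∑ x : ↥N, φ (K ⊔ Subgroup.zpowers (x : G)) = (Nat.card K : ℤ) * φ K := by
        rw [Finset.sum_congr rfl fun x _ => hterm x]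
        rw [Finset.sum_ite, Finset.sum_const, Finset.sum_const_zero, add_zero]
        have hfc : (Finset.univ.filter fun x : ↥N => (x : G) ∈ K).card = Nat.card K := by
          have h1 : (Finset.univ.filter fun x : ↥N => (x : G) ∈ K).card =
              Fintype.card {x : ↥N // (x : G) ∈ K} := (Fintype.card_subtype _).symm
          have h2 : Fintype.card {x : ↥N // (x : G) ∈ K} = Nat.card (K.subgroupOf N) := by
            rw [← Nat.card_eq_fintype_card]
            exact Nat.card_congr (Equiv.subtypeEquivRight fun x =>
              (Subgroup.mem_subgroupOf).symm).symm
          have h3 : Nat.card (K.subgroupOf N) = Nat.card K :=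
            Nat.card_congr (Subgroup.subgroupOfEquivOfLe Subgroup.le_normalizer).toEquiv
          rw [h1, h2, h3]
        rw [hfc, nsmul_eq_mul]
      have hdvd1 : (Nat.card ↥N : ℤ) ∣ (Nat.card K : ℤ) * φ K := hsum ▸ hcong K
      have hdvd2 : burnsideIntMark K K ∣ φ K := by
        have h0 : (Nat.card K : ℤ) ≠ 0 := by
          have : 0 < Nat.card K := Nat.card_pos
          exact_mod_cast this.ne'
        have h1 : (Nat.card K : ℤ) * burnsideIntMark K K ∣ (Nat.card K : ℤ) * φ K := by
          rw [card_mul_mark_self' K]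
          exact hdvd1
        exact (mul_dvd_mul_iff_left h0).mp h1
      obtain ⟨t, ht⟩ := hdvd2
      set ψ : Subgroup G → ℤ := fun U => φ U - t * burnsideIntMark K U with hψ
      have hψconj : ∀ (g : G) (U : Subgroup G), ψ (cj g U) = ψ U := by
        intro g U
        rw [hψ]
        simp only
        rw [hconj, mark_cj]
      have hψcong : ∀ U : Subgroup G, (Nat.card (Subgroup.normalizer (U : Set G)) : ℤ) ∣
          ∑ x : (Subgroup.normalizer (U : Set G)), ψ (U ⊔ Subgroup.zpowers (x : G)) := by
        intro U
        have heq : ∑ x : (Subgroup.normalizer (U : Set G)), ψ (U ⊔ Subgroup.zpowers (x : G)) =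
            (∑ x : (Subgroup.normalizer (U : Set G)), φ (U ⊔ Subgroup.zpowers (x : G))) -
              t * ∑ x : (Subgroup.normalizer (U : Set G)), burnsideIntMark K (U ⊔ Subgroup.zpowers (x : G)) := by
          rw [Finset.mul_sum, ← Finset.sum_sub_distrib]
        rw [heq]
        exact dvd_sub (hcong U) ((mark_congr_dvd K U).mul_left t)
      have hψbd : ∀ U, ψ U ≠ 0 → Nat.card ↥U ≤ n + 1 := by
        intro U hU
        by_cases hφU : φ U = 0
        · have hmne : burnsideIntMark K U ≠ 0 := by
            intro h
            apply hU
            rw [hψ]; simp [hφU, h]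
          have := card_le_of_mark_ne_zero hmne
          omega
        · exact hbd U hφU
      have hψK0 : ψ K = 0 := by rw [hψ]; simp only; rw [ht]; ring
      have htop : ∀ U : Subgroup G, Nat.card ↥U = n + 1 → ψ U ≠ 0 → φ U ≠ 0 := by
        intro U hcard hne hφ0
        have hmne : burnsideIntMark K U ≠ 0 := by
          intro h
          apply hne
          rw [hψ]; simp [hφ0, h]
        obtain ⟨g, hg⟩ := eq_cj_of_mark_ne_zero hmne (by rw [hcard, hKcard])
        rw [hg, hconj] at hφ0
        exact hKne hφ0
      have hψcount : (Finset.univ.filter fun U : Subgroup G =>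
          ψ U ≠ 0 ∧ Nat.card ↥U = n + 1).card ≤ mc := by
        have hsub : (Finset.univ.filter fun U : Subgroup G =>
            ψ U ≠ 0 ∧ Nat.card ↥U = n + 1) ⊆
            (Finset.univ.filter fun U : Subgroup G => φ U ≠ 0 ∧ Nat.card ↥U = n + 1) := by
          intro U hU
          rw [Finset.mem_filter] at hU ⊢
          exact ⟨hU.1, htop U hU.2.2 hU.2.1, hU.2.2⟩
        have hKψ : K ∉ (Finset.univ.filter fun U : Subgroup G =>
            ψ U ≠ 0 ∧ Nat.card ↥U = n + 1) := by
          rw [Finset.mem_filter]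
          push_neg
          intro _ h
          exact absurd hψK0 h
        have hss := Finset.card_lt_card ((Finset.ssubset_iff_of_subset hsub).mpr ⟨K, hKmem, hKψ⟩)
        omega
      obtain ⟨c', hc'⟩ := ihm ψ hψconj hψcong hψbd hψcount
      refine ⟨fun L => c' L + if L = K then t else 0, fun U => ?_⟩
      have hsplit : ∑ L : Subgroup G, (c' L + if L = K then t else 0) * burnsideIntMark L U =
          (∑ L : Subgroup G, c' L * burnsideIntMark L U) + t * burnsideIntMark K U := by
        have : ∀ L : Subgroup G, (c' L + if L = K then t else 0) * burnsideIntMark L U =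
            c' L * burnsideIntMark L U + (if L = K then t * burnsideIntMark L U else 0) := by
          intro L
          by_cases h : L = K <;> simp [h] <;> ring
        rw [Finset.sum_congr rfl fun L _ => this L, Finset.sum_add_distrib,
          Finset.sum_ite_eq' Finset.univ K (fun L => t * burnsideIntMark L U)]
        simp
      rw [hsplit, ← hc' U, hψ]
      simp only
      ring

/-- the indicator of solvable subgroups -/
noncomputable def solvInd (U : Subgroup G) : ℤ := if IsSolvable ↥U then 1 else 0


lemma solvable_of_mulEquiv {A B : Type*} [Group A] [Group B] (e : A ≃* B)
    (h : IsSolvable A) : IsSolvable B := by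
  haveI : Group.IsSolvable A := h
  exact solvable_of_solvable_injective (f := e.symm.toMonoidHom) e.symm.injective

lemma solvInd_conj (g : G) (U : Subgroup G) : solvInd (cj g U) = solvInd U := by
  unfold solvInd
  have e : ↥U ≃* ↥(cj g U) := U.equivMapOfInjective _ (MulAut.conj g).injective
  congr 1
  apply propext
  constructor
  · intro h; exact solvable_of_mulEquiv e.symm h
  · intro h; exact solvable_of_mulEquiv e h

lemma solvable_of_le {U V : Subgroup G} (h : U ≤ V) (hV : IsSolvable ↥V) : IsSolvable ↥U := by
  haveI : Group.IsSolvable ↥V := hV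
  exact solvable_of_solvable_injective (f := Subgroup.inclusion h) (Subgroup.inclusion_injective h)

lemma solvInd_sup_eq_one {U : Subgroup G} (hU : IsSolvable ↥U) {x : G}
    (hx : x ∈ (Subgroup.normalizer (U : Set G))) : solvInd (U ⊔ Subgroup.zpowers x) = 1 := by
  set J := U ⊔ Subgroup.zpowers x with hJdef
  have hUJ : U ≤ J := le_sup_left
  have hxJ : x ∈ J := Subgroup.mem_sup_right (Subgroup.mem_zpowers x)
  have hJN : J ≤ (Subgroup.normalizer (U : Set G)) := sup_le Subgroup.le_normalizer (Subgroup.zpowers_le.mpr hx)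
  set U' := U.subgroupOf J with hU'def
  haveI hU'norm : U'.Normal := by
    constructor
    intro u hu j
    have hmem : (j : G) * (u : G) * (j : G)⁻¹ ∈ U :=
      (Subgroup.mem_normalizer_iff.mp (hJN j.2) (u : G)).mp hu
    exact hmem
  haveI hU'solv : Group.IsSolvable ↥U' :=
    solvable_of_mulEquiv (Subgroup.subgroupOfEquivOfLe hUJ).symm hU
  set θ : ↥J →* (↥J ⧸ U') := QuotientGroup.mk' U' with hθ
  set q : ↥J ⧸ U' := θ ⟨x, hxJ⟩ with hq
  haveI hcyc : IsCyclic (↥J ⧸ U') := by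
    refine ⟨⟨q, ?_⟩⟩
    intro y
    obtain ⟨j, rfl⟩ := QuotientGroup.mk'_surjective U' y
    set S : Subgroup ↥J := (Subgroup.zpowers q).comap θ with hS
    set T : Subgroup G := S.map J.subtype with hT
    have hUT : U ≤ T := by
      intro u hu
      refine ⟨⟨u, hUJ hu⟩, ?_, rfl⟩
      show θ _ ∈ Subgroup.zpowers q
      have : θ ⟨u, hUJ hu⟩ = 1 := (QuotientGroup.eq_one_iff _).mpr hu
      rw [this]
      exact Subgroup.one_mem _
    have hxT : x ∈ T := ⟨⟨x, hxJ⟩, Subgroup.mem_zpowers q, rfl⟩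
    have hJT : J ≤ T := sup_le hUT (Subgroup.zpowers_le.mpr hxT)
    obtain ⟨s, hs, hsj⟩ := hJT j.2
    have : s = j := Subtype.ext hsj
    rw [← this]
    exact hs
  haveI hQsolv : Group.IsSolvable (↥J ⧸ U') := by
    letI : CommGroup (↥J ⧸ U') := IsCyclic.commGroup
    exact isSolvable_of_comm fun a b => mul_comm a b
  have hJsolv : IsSolvable ↥J := by
    apply solvable_of_ker_le_range U'.subtype θ
    rw [Subgroup.range_subtype, hθ, QuotientGroup.ker_mk']
  unfold solvInd
  rw [if_pos hJsolv]

lemma solvInd_cong (U : Subgroup G) :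
    (Nat.card (Subgroup.normalizer (U : Set G)) : ℤ) ∣
      ∑ x : (Subgroup.normalizer (U : Set G)), solvInd (U ⊔ Subgroup.zpowers (x : G)) := by
  by_cases hU : IsSolvable ↥U
  · have : ∀ x : (Subgroup.normalizer (U : Set G)), solvInd (U ⊔ Subgroup.zpowers (x : G)) = 1 := fun x =>
      solvInd_sup_eq_one hU x.2
    rw [Finset.sum_congr rfl fun x _ => this x, Finset.sum_const, Finset.card_univ,
      nsmul_eq_mul, mul_one, ← Nat.card_eq_fintype_card]
  · have : ∀ x : (Subgroup.normalizer (U : Set G)), solvInd (U ⊔ Subgroup.zpowers (x : G)) = 0 := by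
      intro x
      unfold solvInd
      rw [if_neg]
      intro hsolv
      exact hU (solvable_of_le le_sup_left hsolv)
    rw [Finset.sum_congr rfl fun x _ => this x, Finset.sum_const_zero]
    exact dvd_zero _

lemma solvInd_bot : solvInd (⊥ : Subgroup G) = 1 := by
  haveI : Subsingleton ↥(⊥ : Subgroup G) :=
    ⟨fun a b => Subtype.ext (by rw [(Subgroup.mem_bot).mp a.2, (Subgroup.mem_bot).mp b.2])⟩
  have hsb : Group.IsSolvable ↥(⊥ : Subgroup G) := inferInstance
  unfold solvInd
  rw [if_pos (show IsSolvable ↥(⊥ : Subgroup G) from hsb)]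

lemma solvInd_top (h : ¬IsSolvable G) : solvInd (⊤ : Subgroup G) = 0 := by
  unfold solvInd
  rw [if_neg]
  intro hs
  exact h (solvable_of_mulEquiv (Subgroup.topEquiv (G := G)) hs)



end DressAux

/-- Dress' theorem: a finite group `G` is soluble iff the only idempotents of the Burnside
ring `B(G)` are `0` and `1`.  An element of `B(G)` is an integer combination
`Σ_K c_K [G/K]` of transitive `G`-sets, represented here by its image under the injective
mark homomorphism `B(G) → ∏_U ℤ`; it is idempotent iff its mark function is pointwise
idempotent, it is `0` iff all marks vanish, and it is `1 = [G/G]` iff all marks are `1`. -/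
theorem solvable_iff_burnside_idempotents {G : Type*} [Group G] [Fintype G] :
    IsSolvable G ↔
      ∀ c : Subgroup G → ℤ,
        (∀ U : Subgroup G,
            (∑ K : Subgroup G, c K * burnsideIntMark K U) *
              (∑ K : Subgroup G, c K * burnsideIntMark K U) =
            ∑ K : Subgroup G, c K * burnsideIntMark K U) →
        (∀ U : Subgroup G, ∑ K : Subgroup G, c K * burnsideIntMark K U = 0) ∨
        (∀ U : Subgroup G, ∑ K : Subgroup G, c K * burnsideIntMark K U = 1) := by
  constructor
  · intro hG c hid
    exact DressAux.forward_dir hG c hid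
  · intro h
    by_contra hns
    obtain ⟨c, hc⟩ := DressAux.exists_comb (Fintype.card G) (Fintype.card (Subgroup G))
      (DressAux.solvInd (G := G)) (fun g U => DressAux.solvInd_conj g U) DressAux.solvInd_cong
      (fun U _ => by
        have := Subgroup.card_le_card_group U
        simpa [Nat.card_eq_fintype_card] using this)
      (le_trans (Finset.card_filter_le _ _) (by simp))
    have hid : ∀ U : Subgroup G,
        (∑ K : Subgroup G, c K * burnsideIntMark K U) *
          (∑ K : Subgroup G, c K * burnsideIntMark K U) =
        ∑ K : Subgroup G, c K * burnsideIntMark K U := by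
      intro U
      rw [← hc U]
      unfold DressAux.solvInd
      by_cases hsolv : IsSolvable ↥U <;> simp [hsolv]
    rcases h c hid with h0 | h1
    · have hb := h0 ⊥
      rw [← hc ⊥, DressAux.solvInd_bot] at hb
      exact one_ne_zero hb
    · have ht := h1 ⊤
      rw [← hc ⊤, DressAux.solvInd_top hns] at ht
      exact zero_ne_one ht
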